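/- Let L > k be positive integers, let J be an interval of length ((N-1)/(2N))^k, and let I_1, …, I_{2^{L-1}} be the open intervals removed from C_{L-1} to obtain C_L. Then the number of indices r with I_r ∩ J ≠ ∅ is at most 2^{L-k-1}. -/

import Mathlib

open Set

/-- ratio (N-1)/(2N) of each half of the middle-1/N Cantor construction -/
noncomputable def cantorRatio (N : ℕ) : ℝ := (N - 1) / (2 * N)

/-- k-th stage C_k of the middle 1/N Cantor set -/
noncomputable def cantorStage (N : ℕ) : ℕ → Set ℝ
  | 0 => Set.Icc 0 1
  | k + 1 => (fun x => cantorRatio N * x) '' cantorStage N k ∪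
      (fun x => cantorRatio N * x + (N + 1) / (2 * N)) '' cantorStage N k

/-- the middle 1/N Cantor set -/
noncomputable def middleCantorSet (N : ℕ) : Set ℝ := ⋂ k, cantorStage N k

/-- number of stages whose removed middle intervals have length at least δ -/
noncomputable def numStages (N : ℕ) (δ : ℝ) : ℕ :=
  sSup {j : ℕ | δ ≤ 1 / N * cantorRatio N ^ (j - 1)}

/-- X_δ : perform only the removal steps removing intervals of length ≥ δ -/
noncomputable def cantorApprox (N : ℕ) (δ : ℝ) : Set ℝ := cantorStage N (numStages N δ)

/-! ### Auxiliary development: left endpoints of the components of `cantorStage` -/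

/-- left endpoints of the components of the k-th stage of a Cantor-like set of ratio r -/
noncomputable def cEnds (r : ℝ) : ℕ → Finset ℝ
  | 0 => {0}
  | m + 1 => (cEnds r m).image (fun x => r * x) ∪
      (cEnds r m).image (fun x => r * x + (1 - r))

lemma cEnds_zero (r : ℝ) : cEnds r 0 = {0} := rfl

lemma cEnds_succ (r : ℝ) (m : ℕ) : cEnds r (m + 1) =
    (cEnds r m).image (fun x => r * x) ∪
      (cEnds r m).image (fun x => r * x + (1 - r)) := rfl

section basic

variable {r : ℝ} (hr0 : 0 < r) (hr1 : 2 * r < 1)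

include hr0 hr1

lemma cEnds_bounds {m : ℕ} {x : ℝ} (hx : x ∈ cEnds r m) : 0 ≤ x ∧ x ≤ 1 - r ^ m := by
  induction m generalizing x with
  | zero =>
    rw [cEnds_zero, Finset.mem_singleton] at hx
    subst hx; norm_num
  | succ m ih =>
    have hrm : r ^ m ≤ 1 := pow_le_one₀ hr0.le (by linarith)
    have hrmp : (0:ℝ) < r ^ m := pow_pos hr0 m
    have hpow : r ^ (m+1) = r * r ^ m := by ring
    rw [cEnds_succ, Finset.mem_union] at hx
    rcases hx with hx | hx <;> obtain ⟨y, hy, rfl⟩ := Finset.mem_image.mp hx <;>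
      obtain ⟨h1, h2⟩ := ih hy <;> constructor <;> nlinarith

lemma cEnds_sep {m : ℕ} : ∀ x ∈ cEnds r m, ∀ y ∈ cEnds r m, x ≠ y →
    (1 - 2*r) * r ^ m + r ^ (m+1) ≤ r * |x - y| := by
  induction m with
  | zero =>
    intro x hx y hy hxy
    rw [cEnds_zero, Finset.mem_singleton] at hx hy
    exact absurd (hx.trans hy.symm) hxy
  | succ m ih =>
    have hrm : r ^ m ≤ 1 := pow_le_one₀ hr0.le (by linarith)
    have hrmp : (0:ℝ) < r ^ m := pow_pos hr0 m
    have hp1 : r ^ (m+1) = r * r ^ m := by ring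
    have hp2 : r ^ (m+2) = r * r ^ (m+1) := by ring
    have mixed : ∀ a ∈ cEnds r m, ∀ b ∈ cEnds r m,
        (1 - 2*r) * r ^ (m+1) + r ^ (m+2) ≤ r * |r * a - (r * b + (1 - r))| := by
      intro a ha b hb
      obtain ⟨ha0, ha1⟩ := cEnds_bounds hr0 hr1 ha
      obtain ⟨hb0, hb1⟩ := cEnds_bounds hr0 hr1 hb
      have h1 : r * a - (r * b + (1 - r)) ≤ -(1 - 2*r + r^(m+1)) := by nlinarith
      have h2 : 1 - 2*r + r^(m+1) ≤ |r * a - (r * b + (1 - r))| := by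
        rw [abs_sub_comm, abs_of_nonneg (by nlinarith)]
        nlinarith
      have hrr : r ^ (m+1) ≤ r := by nlinarith
      nlinarith [mul_le_mul_of_nonneg_left h2 hr0.le]
    intro x hx y hy hxy
    rw [cEnds_succ, Finset.mem_union] at hx hy
    rcases hx with hx | hx <;> rcases hy with hy | hy <;>
      obtain ⟨x', hx', rfl⟩ := Finset.mem_image.mp hx <;>
      obtain ⟨y', hy', rfl⟩ := Finset.mem_image.mp hy
    · have hne : x' ≠ y' := fun h => hxy (by rw [h])
      have h := ih x' hx' y' hy' hne
      have habs : |r * x' - r * y'| = r * |x' - y'| := by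
        rw [← mul_sub, abs_mul, abs_of_pos hr0]
      rw [habs]; nlinarith
    · exact mixed x' hx' y' hy'
    · rw [abs_sub_comm]; exact mixed y' hy' x' hx'
    · have hne : x' ≠ y' := fun h => hxy (by rw [h])
      have h := ih x' hx' y' hy' hne
      have habs : |r * x' + (1-r) - (r * y' + (1-r))| = r * |x' - y'| := by
        rw [show r * x' + (1-r) - (r * y' + (1-r)) = r * x' - r * y' by ring,
          ← mul_sub, abs_mul, abs_of_pos hr0]
      rw [habs]; nlinarith

/-- distinct endpoints are more than a component-length apart -/
lemma cEnds_sep' {m : ℕ} {x y : ℝ} (hx : x ∈ cEnds r m) (hy : y ∈ cEnds r m)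
    (hxy : x ≠ y) : r ^ m < |x - y| := by
  have h := cEnds_sep hr0 hr1 x hx y hy hxy
  have hrmp : (0:ℝ) < r ^ m := pow_pos hr0 m
  have hp1 : r ^ (m+1) = r * r ^ m := by ring
  nlinarith [abs_nonneg (x - y)]

lemma cEnds_card (m : ℕ) : (cEnds r m).card = 2 ^ m := by
  induction m with
  | zero => rfl
  | succ m ih =>
    have hinj1 : Function.Injective (fun x : ℝ => r * x) :=
      fun a b h => mul_left_cancel₀ hr0.ne' h
    have hinj2 : Function.Injective (fun x : ℝ => r * x + (1 - r)) := by
      intro a b h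
      simp only at h
      have : r * a = r * b := by linarith
      exact mul_left_cancel₀ hr0.ne' this
    have hdisj : Disjoint ((cEnds r m).image (fun x => r * x))
        ((cEnds r m).image (fun x => r * x + (1 - r))) := by
      rw [Finset.disjoint_left]
      intro t ht1 ht2
      obtain ⟨a, ha, rfl⟩ := Finset.mem_image.mp ht1
      obtain ⟨b, hb, heq⟩ := Finset.mem_image.mp ht2
      obtain ⟨ha0, ha1⟩ := cEnds_bounds hr0 hr1 ha
      obtain ⟨hb0, hb1⟩ := cEnds_bounds hr0 hr1 hb
      have hrm : r ^ m ≤ 1 := pow_le_one₀ hr0.le (by linarith)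
      nlinarith [mul_le_mul_of_nonneg_left ha1 hr0.le, mul_nonneg hr0.le hb0,
        pow_pos hr0 m]
    rw [cEnds_succ, Finset.card_union_of_disjoint hdisj,
      Finset.card_image_of_injective _ hinj1, Finset.card_image_of_injective _ hinj2, ih]
    ring

omit hr0 hr1 in
/-- the refinement recursion: stage m+1 endpoints from stage m endpoints -/
lemma cEnds_succ' (m : ℕ) : cEnds r (m + 1) =
    cEnds r m ∪ (cEnds r m).image (fun x => x + (1 - r) * r ^ m) := by
  induction m with
  | zero =>
    rw [cEnds_succ, cEnds_zero]
    ext t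
    simp only [Finset.mem_union, Finset.image_singleton, Finset.mem_singleton]
    norm_num
  | succ m ih =>
    rw [cEnds_succ r (m+1)]
    conv_lhs => rw [ih]
    conv_rhs => rw [cEnds_succ r m]
    have e1 : ∀ s : Finset ℝ,
        (s.image (fun x => x + (1 - r) * r ^ m)).image (fun x => r * x) =
          (s.image (fun x => r * x)).image (fun x => x + (1 - r) * r ^ (m+1)) := by
      intro s
      rw [Finset.image_image, Finset.image_image]
      apply Finset.image_congr
      intro x _
      simp only [Function.comp_apply]
      ring
    have e2 : ∀ s : Finset ℝ,
        (s.image (fun x => x + (1 - r) * r ^ m)).image (fun x => r * x + (1 - r)) =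
          (s.image (fun x => r * x + (1 - r))).image (fun x => x + (1 - r) * r ^ (m+1)) := by
      intro s
      rw [Finset.image_image, Finset.image_image]
      apply Finset.image_congr
      intro x _
      simp only [Function.comp_apply]
      ring
    rw [Finset.image_union, Finset.image_union, e1, e2, Finset.image_union]
    ext t
    simp only [Finset.mem_union]
    tauto

end basic

/-! ### Counting lemmas -/

/-- number of endpoints below `b` -/
noncomputable def pCnt (r : ℝ) (m : ℕ) (b : ℝ) : ℕ :=
  ((cEnds r m).filter (fun x => x < b)).card

/-- number of endpoints above `1 - r^m - a` -/
noncomputable def sCnt (r : ℝ) (m : ℕ) (a : ℝ) : ℕ :=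
  ((cEnds r m).filter (fun x => 1 - r ^ m - a < x)).card

section counting

variable {r : ℝ} (hr0 : 0 < r) (hr1 : 2 * r < 1)

include hr0 hr1

lemma pCnt_succ_le {m : ℕ} {b : ℝ} (hb : b ≤ 1 - r) :
    pCnt r (m+1) b ≤ pCnt r m (b / r) := by
  unfold pCnt
  rw [cEnds_succ, Finset.filter_union]
  have h2 : ((cEnds r m).image (fun x => r * x + (1 - r))).filter (fun x => x < b) = ∅ := by
    rw [Finset.filter_eq_empty_iff]
    intro t ht
    obtain ⟨y, hy, rfl⟩ := Finset.mem_image.mp ht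
    obtain ⟨hy0, _⟩ := cEnds_bounds hr0 hr1 hy
    push_neg
    nlinarith
  rw [h2, Finset.union_empty, Finset.filter_image]
  calc (((cEnds r m).filter (fun a => r * a < b)).image (fun x => r * x)).card
      ≤ ((cEnds r m).filter (fun a => r * a < b)).card := Finset.card_image_le
    _ ≤ _ := by
        apply Finset.card_le_card
        apply Finset.monotone_filter_right
        intro x _ hx
        exact (lt_div_iff₀ hr0).mpr (by rw [mul_comm]; exact hx)

lemma sCnt_succ_le {m : ℕ} {a : ℝ} (ha : a ≤ 1 - r) :
    sCnt r (m+1) a ≤ sCnt r m (a / r) := by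
  unfold sCnt
  rw [cEnds_succ, Finset.filter_union]
  have h1 : ((cEnds r m).image (fun x => r * x)).filter
      (fun x => 1 - r ^ (m+1) - a < x) = ∅ := by
    rw [Finset.filter_eq_empty_iff]
    intro t ht
    obtain ⟨y, hy, rfl⟩ := Finset.mem_image.mp ht
    obtain ⟨_, hy1⟩ := cEnds_bounds hr0 hr1 hy
    push_neg
    have : r * y ≤ r * (1 - r ^ m) := mul_le_mul_of_nonneg_left hy1 hr0.le
    have hpow : r * (1 - r ^ m) = r - r ^ (m+1) := by ring
    nlinarith
  rw [h1, Finset.empty_union, Finset.filter_image]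
  calc (((cEnds r m).filter (fun x => 1 - r ^ (m+1) - a < r * x + (1 - r))).image
        (fun x => r * x + (1 - r))).card
      ≤ ((cEnds r m).filter (fun x => 1 - r ^ (m+1) - a < r * x + (1 - r))).card :=
        Finset.card_image_le
    _ ≤ _ := by
        apply Finset.card_le_card
        apply Finset.monotone_filter_right
        intro x _ hx
        have hx' : r * (1 - r ^ m - a / r) < r * x := by
          have : r * (1 - r ^ m - a / r) = r - r ^ (m+1) - a := by
            field_simp; ring
          nlinarith
        exact lt_of_mul_lt_mul_left hx' hr0.le

lemma cPrime : ∀ (k M : ℕ), k ≤ M → ∀ a b : ℝ, 0 ≤ a → 0 ≤ b →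
    r * (a + b) ≤ r^(k+1) + (1 - 2*r)*r^(M+1) - r^(M+1) - (1 - 2*r) →
    sCnt r M a + pCnt r M b ≤ 2 ^ (M - k) := by
  intro k
  induction k with
  | zero =>
    intro M _ a b ha hb hab
    have hrM : r ^ M ≤ 1 := pow_le_one₀ hr0.le (by linarith)
    have hrM1 : r ^ (M+1) = r * r ^ M := by ring
    have hr2 : r ^ 1 = r := pow_one r
    -- a + b ≤ 1 - r^M, so the two filtered sets are disjoint
    have hpow1 : r ^ (M+1) ≤ 1 := pow_le_one₀ hr0.le (by linarith)
    have hmul : (1 - 2*r) * r^(M+1) ≤ (1 - 2*r) * 1 :=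
      mul_le_mul_of_nonneg_left hpow1 (by linarith)
    have hr01 : r ^ (0+1) = r := by norm_num
    have h1 : r * (a + b) ≤ r * (1 - r ^ M) := by
      rw [hr01] at hab
      nlinarith
    have key : b ≤ 1 - r ^ M - a := by
      have := le_of_mul_le_mul_left h1 hr0
      linarith
    unfold sCnt pCnt
    have hdisj : Disjoint ((cEnds r M).filter (fun x => 1 - r ^ M - a < x))
        ((cEnds r M).filter (fun x => x < b)) := by
      rw [Finset.disjoint_left]
      intro t ht1 ht2
      have h1 := (Finset.mem_filter.mp ht1).2
      have h2 := (Finset.mem_filter.mp ht2).2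
      linarith
    calc ((cEnds r M).filter (fun x => 1 - r ^ M - a < x)).card +
          ((cEnds r M).filter (fun x => x < b)).card
        = (((cEnds r M).filter (fun x => 1 - r ^ M - a < x)) ∪
            ((cEnds r M).filter (fun x => x < b))).card :=
          (Finset.card_union_of_disjoint hdisj).symm
      _ ≤ (cEnds r M).card := Finset.card_le_card
          (Finset.union_subset (Finset.filter_subset _ _) (Finset.filter_subset _ _))
      _ = 2 ^ M := cEnds_card hr0 hr1 M
      _ = 2 ^ (M - 0) := by rw [Nat.sub_zero]
  | succ k ihk =>
    intro M hkM a b ha hb hab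
    obtain ⟨M', rfl⟩ : ∃ M', M = M' + 1 := ⟨M - 1, by omega⟩
    have hrk : r ^ (k+2) ≤ r^2 := by
      calc r ^ (k+2) = r^2 * r^k := by ring
        _ ≤ r^2 * 1 := by
            apply mul_le_mul_of_nonneg_left (pow_le_one₀ hr0.le (by linarith))
            positivity
        _ = r^2 := mul_one _
    have hrle1 : r ≤ 1 := by linarith
    have hpowM : r ^ (M'+2) ≤ 1 := pow_le_one₀ hr0.le hrle1
    have hpowMp : (0:ℝ) < r ^ (M'+2) := pow_pos hr0 _
    have habr : a + b ≤ r := by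
      have h1 : r * (a + b) ≤ r * r := by nlinarith
      have := le_of_mul_le_mul_left h1 hr0
      linarith
    have ha1 : a ≤ 1 - r := by linarith
    have hb1 : b ≤ 1 - r := by linarith
    have hstep : sCnt r (M'+1) a + pCnt r (M'+1) b ≤
        sCnt r M' (a / r) + pCnt r M' (b / r) :=
      Nat.add_le_add (sCnt_succ_le hr0 hr1 ha1) (pCnt_succ_le hr0 hr1 hb1)
    have hIH := ihk M' (by omega) (a / r) (b / r)
      (div_nonneg ha hr0.le) (div_nonneg hb hr0.le) (by
        have e : r * (a / r + b / r) = a + b := by field_simp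
        rw [e]
        have h1 : r * (a + b) ≤ r^(k+2) + (1 - 2*r)*r^(M'+2) - r^(M'+2) - (1 - 2*r) := hab
        have h2 : r * (r^(k+1) + (1 - 2*r)*r^(M'+1) - r^(M'+1) - (1 - 2*r)) =
            r^(k+2) + (1 - 2*r)*r^(M'+2) - r^(M'+2) - r * (1 - 2*r) := by ring
        have h3 : r * (a + b) ≤ r * (r^(k+1) + (1 - 2*r)*r^(M'+1) - r^(M'+1) - (1 - 2*r)) := by
          rw [h2]; nlinarith
        exact le_of_mul_le_mul_left h3 hr0)
    calc sCnt r (M'+1) a + pCnt r (M'+1) b ≤ sCnt r M' (a / r) + pCnt r M' (b / r) := hstep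
      _ ≤ 2 ^ (M' - k) := hIH
      _ = 2 ^ (M' + 1 - (k+1)) := by rw [Nat.succ_sub_succ]

end counting

section dcount

variable {r : ℝ} (hr0 : 0 < r) (hr1 : 2 * r < 1)

include hr0 hr1

/-- Main counting lemma: an open interval of length `r^k + (1-2r) r^M` contains at most
`2^(M-k)` endpoints of level `M`. -/
lemma dCnt : ∀ (k M : ℕ), k ≤ M → ∀ w : ℝ,
    ((cEnds r M).filter (fun x => w < x ∧ x < w + (r^k + (1 - 2*r)*r^M))).card ≤
      2 ^ (M - k) := by
  intro k
  induction k with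
  | zero =>
    intro M _ w
    calc ((cEnds r M).filter _).card ≤ (cEnds r M).card := Finset.card_filter_le _ _
      _ = 2 ^ M := cEnds_card hr0 hr1 M
      _ = 2 ^ (M - 0) := by rw [Nat.sub_zero]
  | succ k ihk =>
    intro M hkM w
    obtain ⟨M', rfl⟩ : ∃ M', M = M' + 1 := ⟨M - 1, by omega⟩
    have hkM' : k ≤ M' := by omega
    set ℓ : ℝ := r^(k+1) + (1 - 2*r)*r^(M'+1) with hℓ
    have hrM'pos : (0:ℝ) < r ^ M' := pow_pos hr0 M'
    have hrM'le : r ^ M' ≤ 1 := pow_le_one₀ hr0.le (by linarith)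
    have hMsub : M' + 1 - (k + 1) = M' - k := Nat.succ_sub_succ M' k
    rw [cEnds_succ, Finset.filter_union]
    have hcardL : (((cEnds r M').image (fun x => r * x)).filter
        (fun x => w < x ∧ x < w + ℓ)).card =
        ((cEnds r M').filter (fun x => w < r * x ∧ r * x < w + ℓ)).card := by
      rw [Finset.filter_image]
      apply Finset.card_image_of_injective
      intro u v huv
      exact mul_left_cancel₀ hr0.ne' huv
    have hcardR : (((cEnds r M').image (fun x => r * x + (1 - r))).filter
        (fun x => w < x ∧ x < w + ℓ)).card =
        ((cEnds r M').filter (fun x => w < r * x + (1 - r) ∧ r * x + (1 - r) < w + ℓ)).card := by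
      rw [Finset.filter_image]
      apply Finset.card_image_of_injective
      intro u v huv
      simp only at huv
      have : r * u = r * v := by linarith
      exact mul_left_cancel₀ hr0.ne' this
    refine le_trans (Finset.card_union_le _ _) ?_
    rw [hcardL, hcardR]
    by_cases hA : w + ℓ ≤ 1 - r
    · -- the interval misses the right copy
      have hR0 : ((cEnds r M').filter
          (fun x => w < r * x + (1 - r) ∧ r * x + (1 - r) < w + ℓ)).card = 0 := by
        rw [Finset.card_eq_zero, Finset.filter_eq_empty_iff]
        intro x hx
        obtain ⟨hx0, _⟩ := cEnds_bounds hr0 hr1 hx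
        push_neg
        intro _
        nlinarith
      have hLle : ((cEnds r M').filter (fun x => w < r * x ∧ r * x < w + ℓ)).card ≤
          ((cEnds r M').filter
            (fun x => w/r < x ∧ x < w/r + (r^k + (1 - 2*r)*r^M'))).card := by
        apply Finset.card_le_card
        apply Finset.monotone_filter_right
        intro x _ hx
        obtain ⟨h1, h2⟩ := hx
        constructor
        · exact (div_lt_iff₀ hr0).mpr (by rw [mul_comm]; exact h1)
        · have : r * x < r * (w/r + (r^k + (1 - 2*r)*r^M')) := by
            have e : r * (w/r + (r^k + (1 - 2*r)*r^M')) = w + ℓ := by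
              field_simp; ring
            rw [e]; exact h2
          exact lt_of_mul_lt_mul_left this hr0.le
      rw [hR0, Nat.add_zero, hMsub]
      exact le_trans hLle (ihk M' hkM' (w/r))
    · push_neg at hA
      by_cases hB : r - r^(M'+1) ≤ w
      · -- the interval misses the left copy
        have hL0 : ((cEnds r M').filter (fun x => w < r * x ∧ r * x < w + ℓ)).card = 0 := by
          rw [Finset.card_eq_zero, Finset.filter_eq_empty_iff]
          intro x hx
          obtain ⟨_, hx1⟩ := cEnds_bounds hr0 hr1 hx
          push_neg
          intro h1
          exfalso
          have : r * x ≤ r * (1 - r^M') := mul_le_mul_of_nonneg_left hx1 hr0.le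
          have e : r * (1 - r^M') = r - r^(M'+1) := by ring
          nlinarith
        have hRle : ((cEnds r M').filter
            (fun x => w < r * x + (1 - r) ∧ r * x + (1 - r) < w + ℓ)).card ≤
            ((cEnds r M').filter (fun x => (w - (1-r))/r < x ∧
              x < (w - (1-r))/r + (r^k + (1 - 2*r)*r^M'))).card := by
          apply Finset.card_le_card
          apply Finset.monotone_filter_right
          intro x _ hx
          obtain ⟨h1, h2⟩ := hx
          constructor
          · exact (div_lt_iff₀ hr0).mpr (by nlinarith)
          · have : r * x < r * ((w - (1-r))/r + (r^k + (1 - 2*r)*r^M')) := by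
              have e : r * ((w - (1-r))/r + (r^k + (1 - 2*r)*r^M')) = w + ℓ - (1 - r) := by
                field_simp; ring
              rw [e]; linarith
            exact lt_of_mul_lt_mul_left this hr0.le
        rw [hL0, Nat.zero_add, hMsub]
        exact le_trans hRle (ihk M' hkM' ((w - (1-r))/r))
      · -- the interval straddles the central gap
        push_neg at hB
        set c : ℝ := 1 - r^M' - w/r with hc
        set d : ℝ := (w + ℓ - (1 - r))/r with hd
        have hc0 : 0 ≤ c := by
          have : w/r < 1 - r^M' := by
            rw [div_lt_iff₀ hr0]
            have e : (1 - r^M') * r = r - r^(M'+1) := by ring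
            linarith
          simp only [hc]; linarith
        have hd0 : 0 ≤ d := by
          have : 0 < w + ℓ - (1 - r) := by linarith
          positivity
        have hLle : ((cEnds r M').filter (fun x => w < r * x ∧ r * x < w + ℓ)).card ≤
            sCnt r M' c := by
          unfold sCnt
          apply Finset.card_le_card
          apply Finset.monotone_filter_right
          intro x _ hx
          have h1 := hx.1
          have e : 1 - r ^ M' - c = w / r := by simp only [hc]; ring
          rw [e, div_lt_iff₀ hr0, mul_comm]
          exact h1
        have hRle : ((cEnds r M').filter
            (fun x => w < r * x + (1 - r) ∧ r * x + (1 - r) < w + ℓ)).card ≤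
            pCnt r M' d := by
          unfold pCnt
          apply Finset.card_le_card
          apply Finset.monotone_filter_right
          intro x _ hx
          have h2 := hx.2
          rw [hd, lt_div_iff₀ hr0, mul_comm]
          linarith
        have hsum : r * (c + d) = r^(k+1) + (1 - 2*r)*r^(M'+1) - r^(M'+1) - (1 - 2*r) := by
          simp only [hc, hd, hℓ]
          field_simp
          ring
        have := cPrime hr0 hr1 k M' hkM' c d hc0 hd0 (le_of_eq hsum)
        rw [hMsub]
        exact le_trans (Nat.add_le_add hLle hRle) this

end dcount

/-! ### Identification of the stages and removed gaps -/

section stage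

variable {N : ℕ} (hN : 3 ≤ N)

include hN

lemma cantorRatio_pos : 0 < cantorRatio N := by
  have hn : (3:ℝ) ≤ N := by exact_mod_cast hN
  unfold cantorRatio
  apply div_pos <;> linarith

lemma cantorRatio_lt : 2 * cantorRatio N < 1 := by
  have hn : (3:ℝ) ≤ N := by exact_mod_cast hN
  unfold cantorRatio
  rw [mul_comm, div_mul_eq_mul_div, div_lt_one (by linarith)]
  linarith

lemma translate_eq : ((N:ℝ) + 1) / (2 * N) = 1 - cantorRatio N := by
  have hn : (3:ℝ) ≤ N := by exact_mod_cast hN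
  unfold cantorRatio
  field_simp
  ring

lemma stage_eq (m : ℕ) : cantorStage N m =
    ⋃ x ∈ cEnds (cantorRatio N) m, Icc x (x + cantorRatio N ^ m) := by
  have hr0 := cantorRatio_pos hN
  set r := cantorRatio N with hrdef
  induction m with
  | zero =>
    show Icc (0:ℝ) 1 = _
    rw [cEnds_zero, Finset.set_biUnion_singleton]
    norm_num
  | succ m ih =>
    have hdef : cantorStage N (m+1) = (fun x => r * x) '' cantorStage N m ∪
        (fun x => r * x + ((N:ℝ) + 1) / (2 * N)) '' cantorStage N m := rfl
    rw [hdef, translate_eq hN, ih]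
    rw [Set.image_iUnion₂, Set.image_iUnion₂]
    conv_rhs => rw [cEnds_succ r m, Finset.set_biUnion_union,
      Finset.set_biUnion_finset_image, Finset.set_biUnion_finset_image]
    congr 1
    · exact Set.iUnion₂_congr fun x hx => by
        rw [Set.image_mul_left_Icc' hr0,
          show r * (x + r ^ m) = r * x + r ^ (m+1) from by ring]
    · exact Set.iUnion₂_congr fun x hx => by
        rw [Set.image_affine_Icc' hr0,
          show r * (x + r ^ m) + (1 - r) = r * x + (1 - r) + r ^ (m+1) from by ring]

lemma stage_diff (m : ℕ) : cantorStage N m \ cantorStage N (m+1) =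
    ⋃ x ∈ cEnds (cantorRatio N) m,
      Ioo (x + cantorRatio N ^ (m+1)) (x + (1 - cantorRatio N) * cantorRatio N ^ m) := by
  have hr0 := cantorRatio_pos hN
  have hr1 := cantorRatio_lt hN
  set r := cantorRatio N with hrdef
  have hrmp : (0:ℝ) < r ^ m := pow_pos hr0 m
  have hrm1p : (0:ℝ) < r ^ (m+1) := pow_pos hr0 (m+1)
  have hp1 : r ^ (m+1) = r * r ^ m := by ring
  have hle1 : r ^ (m+1) ≤ r ^ m := by nlinarith
  have hge0 : (0:ℝ) ≤ (1 - r) * r ^ m := by nlinarith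
  have h1r : (1 - r) * r ^ m ≤ r ^ m := by nlinarith
  have hsucc : cantorStage N (m+1) =
      (⋃ x ∈ cEnds r m, Icc x (x + r^(m+1))) ∪
        (⋃ x ∈ cEnds r m, Icc (x + (1 - r) * r ^ m) (x + r ^ m)) := by
    rw [stage_eq hN (m+1)]
    conv_lhs => rw [cEnds_succ' (r := r) m, Finset.set_biUnion_union,
      Finset.set_biUnion_finset_image]
    congr 1
    exact Set.iUnion₂_congr fun x hx => by
      rw [show x + (1 - r) * r ^ m + r ^ (m+1) = x + r ^ m from by ring]
  rw [stage_eq hN m, hsucc]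
  ext t
  constructor
  · rintro ⟨hmem, hnot⟩
    rw [Set.mem_iUnion₂] at hmem
    obtain ⟨x, hx, ht⟩ := hmem
    rw [Set.mem_Icc] at ht
    have h1 : t ∉ ⋃ x ∈ cEnds r m, Icc x (x + r^(m+1)) := fun h => hnot (Or.inl h)
    have h2 : t ∉ ⋃ x ∈ cEnds r m, Icc (x + (1 - r) * r ^ m) (x + r ^ m) :=
      fun h => hnot (Or.inr h)
    rw [Set.mem_iUnion₂] at h1 h2
    push_neg at h1 h2
    have h1x := h1 x hx
    have h2x := h2 x hx
    rw [Set.mem_Icc] at h1x h2x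
    push_neg at h1x h2x
    rw [Set.mem_iUnion₂]
    refine ⟨x, hx, Set.mem_Ioo.mpr ⟨h1x ht.1, ?_⟩⟩
    by_contra hcon
    push_neg at hcon
    exact absurd ht.2 (not_le.mpr (h2x hcon))
  · intro ht
    rw [Set.mem_iUnion₂] at ht
    obtain ⟨x, hx, ht⟩ := ht
    rw [Set.mem_Ioo] at ht
    have key : ∀ y ∈ cEnds r m, y ≠ x → y ≤ t → t ≤ y + r ^ m → False := by
      intro y hy hyx hy1 hy2
      have hsep := cEnds_sep' hr0 hr1 hy hx hyx
      rcases le_or_gt y x with h' | h'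
      · rw [abs_of_nonpos (by linarith)] at hsep
        have hxlt : x < t := by linarith [ht.1]
        linarith
      · rw [abs_of_pos (by linarith)] at hsep
        linarith [ht.2]
    constructor
    · rw [Set.mem_iUnion₂]
      exact ⟨x, hx, Set.mem_Icc.mpr ⟨by linarith [ht.1], by linarith [ht.2]⟩⟩
    · intro hcontra
      rcases hcontra with h | h
      · rw [Set.mem_iUnion₂] at h
        obtain ⟨y, hy, hty⟩ := h
        rw [Set.mem_Icc] at hty
        by_cases hxy : y = x
        · subst hxy; linarith [ht.1, hty.2]
        · exact key y hy hxy hty.1 (by linarith [hty.2])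
      · rw [Set.mem_iUnion₂] at h
        obtain ⟨y, hy, hty⟩ := h
        rw [Set.mem_Icc] at hty
        by_cases hxy : y = x
        · subst hxy; linarith [ht.2, hty.1]
        · exact key y hy hxy (by linarith [hty.1]) hty.2

end stage

theorem stmt3 (N : ℕ) (hN : 3 ≤ N) (k L : ℕ) (hk : 1 ≤ k) (hL : k < L)
    (I : Fin (2 ^ (L - 1)) → Set ℝ)
    (hopen : ∀ j, ∃ p q : ℝ, p < q ∧ I j = Set.Ioo p q)
    (hdisj : Pairwise (Function.onFun Disjoint I))
    (hrem : (⋃ j, I j) = cantorStage N (L - 1) \ cantorStage N L)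
    (a : ℝ) :
    Nat.card {j : Fin (2 ^ (L - 1)) // (I j ∩ Set.Icc a (a + cantorRatio N ^ k)).Nonempty} ≤
      2 ^ (L - k - 1) := by
  classical
  have hr0 := cantorRatio_pos hN
  have hr1 := cantorRatio_lt hN
  set r := cantorRatio N with hrdef
  obtain ⟨M, rfl⟩ : ∃ M, L = M + 1 := ⟨L - 1, by omega⟩
  have hkM : k ≤ M := by omega
  have hrm1p : (0:ℝ) < r ^ (M+1) := pow_pos hr0 _
  have hrmp : (0:ℝ) < r ^ M := pow_pos hr0 _
  have hp1 : r ^ (M+1) = r * r ^ M := by ring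
  set G : ℝ → Set ℝ := fun x => Ioo (x + r ^ (M+1)) (x + (1 - r) * r ^ M) with hG
  simp only [Nat.add_sub_cancel] at hrem
  have hrem' : (⋃ j, I j) = ⋃ x ∈ cEnds r M, G x := by
    rw [hrem, stage_diff hN M]
  have hGopen : ∀ x : ℝ, IsOpen (G x) := fun x => isOpen_Ioo
  have hGne : ∀ x : ℝ, (G x).Nonempty := fun x => Set.nonempty_Ioo.mpr (by nlinarith)
  have hGdisjoint : ∀ x ∈ cEnds r M, ∀ y ∈ cEnds r M, x ≠ y → Disjoint (G x) (G y) := by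
    intro x hx y hy hxy
    rw [Set.disjoint_left]
    intro t htx hty
    have hsep := cEnds_sep' hr0 hr1 hx hy hxy
    obtain ⟨hx1, hx2⟩ := htx
    obtain ⟨hy1, hy2⟩ := hty
    have h1r : (1 - r) * r ^ M ≤ r ^ M := by nlinarith
    rcases le_or_gt x y with h' | h'
    · rw [abs_of_nonpos (by linarith)] at hsep; linarith
    · rw [abs_of_pos (by linarith)] at hsep; linarith
  have hIsub : ∀ j, I j ⊆ ⋃ x ∈ cEnds r M, G x := by
    intro j
    rw [← hrem']
    exact Set.subset_iUnion _ j
  have hchoice : ∀ j, ∃ x, x ∈ cEnds r M ∧ I j ⊆ G x := by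
    intro j
    obtain ⟨p, q, hpq, hIj⟩ := hopen j
    have hne : (I j).Nonempty := by rw [hIj]; exact Set.nonempty_Ioo.mpr hpq
    obtain ⟨t, ht⟩ := hne
    have htU := hIsub j ht
    rw [Set.mem_iUnion₂] at htU
    obtain ⟨x, hx, htx⟩ := htU
    refine ⟨x, hx, ?_⟩
    have hpre : IsPreconnected (I j) := by rw [hIj]; exact isPreconnected_Ioo
    have hopenU : IsOpen (⋃ y ∈ (cEnds r M).erase x, G y) :=
      isOpen_biUnion fun y _ => hGopen y
    have hdisjU : Disjoint (G x) (⋃ y ∈ (cEnds r M).erase x, G y) := by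
      rw [Set.disjoint_iUnion₂_right]
      intro y hy
      exact hGdisjoint x hx y (Finset.mem_of_mem_erase hy)
        (Ne.symm (Finset.ne_of_mem_erase hy))
    have hsub2 : I j ⊆ G x ∪ ⋃ y ∈ (cEnds r M).erase x, G y := by
      intro s hs
      have hmem := hIsub j hs
      rw [Set.mem_iUnion₂] at hmem
      obtain ⟨y, hy, hsy⟩ := hmem
      by_cases hxy : y = x
      · subst hxy; exact Or.inl hsy
      · exact Or.inr (Set.mem_iUnion₂.mpr ⟨y, Finset.mem_erase.mpr ⟨hxy, hy⟩, hsy⟩)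
    exact hpre.subset_left_of_subset_union (hGopen x) hopenU hdisjU hsub2 ⟨t, ht, htx⟩
  choose xj hxjE hxjsub using hchoice
  have hsurj : ∀ x ∈ cEnds r M, ∃ j, xj j = x := by
    intro x hx
    by_contra hcon
    push_neg at hcon
    obtain ⟨t, ht⟩ := hGne x
    have htmem : t ∈ ⋃ j, I j := by
      rw [hrem']
      exact Set.mem_iUnion₂.mpr ⟨x, hx, ht⟩
    rw [Set.mem_iUnion] at htmem
    obtain ⟨j, htj⟩ := htmem
    exact Set.disjoint_left.mp (hGdisjoint _ (hxjE j) x hx (hcon j)) (hxjsub j htj) ht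
  have hcardE : Fintype.card {x // x ∈ cEnds r M} = 2 ^ M := by
    rw [Fintype.card_coe, cEnds_card hr0 hr1]
  have hFsurj : Function.Surjective (fun j : Fin (2^(M+1-1)) =>
      (⟨xj j, hxjE j⟩ : {x // x ∈ cEnds r M})) := by
    rintro ⟨x, hx⟩
    obtain ⟨j, hj⟩ := hsurj x hx
    exact ⟨j, Subtype.ext hj⟩
  have hFbij := (Fintype.bijective_iff_surjective_and_card _).mpr ⟨hFsurj, by
    rw [Fintype.card_fin, hcardE]
    simp⟩
  have hxj_inj : Function.Injective xj := by
    intro j1 j2 h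
    exact hFbij.injective (Subtype.ext h)
  set w : ℝ := a - (1 - r) * r ^ M with hw
  set T := (cEnds r M).filter (fun x => w < x ∧ x < w + (r ^ k + (1 - 2*r) * r ^ M)) with hT
  have hmap : ∀ j : {j // (I j ∩ Icc a (a + r ^ k)).Nonempty}, xj j.1 ∈ T := by
    rintro ⟨j, ⟨t, htI, htJ⟩⟩
    have htG := hxjsub j htI
    obtain ⟨h1, h2⟩ := htG
    obtain ⟨h3, h4⟩ := htJ
    rw [hT, Finset.mem_filter]
    refine ⟨hxjE j, ?_, ?_⟩
    · simp only [hw]; linarith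
    · have he : w + (r ^ k + (1 - 2*r) * r ^ M) = a + r ^ k - r ^ (M+1) := by
        simp only [hw]; rw [hp1]; ring
      rw [he]; linarith
  have hinj2 : Function.Injective (fun j : {j // (I j ∩ Icc a (a + r ^ k)).Nonempty} =>
      (⟨xj j.1, hmap j⟩ : {x // x ∈ T})) := by
    intro j1 j2 h
    exact Subtype.ext (hxj_inj (congrArg Subtype.val h))
  calc Nat.card {j // (I j ∩ Icc a (a + r ^ k)).Nonempty}
      ≤ Nat.card {x // x ∈ T} := Nat.card_le_card_of_injective _ hinj2
    _ = T.card := by rw [Nat.card_eq_fintype_card, Fintype.card_coe]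
    _ ≤ 2 ^ (M - k) := dCnt hr0 hr1 k M hkM w
    _ = 2 ^ (M + 1 - k - 1) := by congr 1; omega
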